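/- Assume k − 1 ≤ LR and fix 1 ≤ j ≤ k − 1. Then a_{j+1}(π^(j)) = a_j(π^(j+1)) and b_j(π^(j+1)) = b_{j+1}(π^(j)) + 1; consequently w_j(π^(j+1)) − w_{j+1}(π^(j)) = β_C > 0 and w_j(π^(j+1)) + w_{j+1}(π^(j+1)) = w_j(π^(j)) + w_{j+1}(π^(j)). -/

import Mathlib

/-- Relative location `h_π(i) = #{1 ≤ j ≤ i : π j = π i}`. -/
def relLoc (π : ℕ → ℕ) (i : ℕ) : ℕ :=
  ((Finset.Icc 1 i).filter (fun j => π j = π i)).card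

/-- Intra-cluster coefficient `a_i(π) = d_I + 1 − h_π(i)` (truncated subtraction). -/
def aCoef (dI : ℕ) (π : ℕ → ℕ) (i : ℕ) : ℕ :=
  dI + 1 - relLoc π i

/-- Cross-cluster coefficient `b_i(π) = max(0, d_C − (i − h_π(i)))` (truncated subtraction). -/
def bCoef (dC : ℕ) (π : ℕ → ℕ) (i : ℕ) : ℕ :=
  dC - (i - relLoc π i)

/-- Part incoming weight `w_i(π)`: for a separate position (`π i = 0`) it is
`(d_I + d_C + 1 − i)·β_C`, otherwise `a_i(π)·β_I + b_i(π)·β_C`. -/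
noncomputable def weight (dI dC : ℕ) (βI βC : ℝ) (π : ℕ → ℕ) (i : ℕ) : ℝ :=
  if π i = 0 then ((dI + dC + 1 - i : ℕ) : ℝ) * βC
  else (aCoef dI π i : ℝ) * βI + (bCoef dC π i : ℝ) * βC

/-- Min-cut `MC(π) = Σ_{i=1}^k min(α, w_i(π))`. -/
noncomputable def MC (k dI dC : ℕ) (βI βC α : ℝ) (π : ℕ → ℕ) : ℝ :=
  ∑ i ∈ Finset.Icc 1 k, min α (weight dI dC βI βC π i)

/-- A cluster order: a `k`-tuple with entries in `{0, 1, …, L}`. -/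
def IsClusterOrder (L k : ℕ) (π : ℕ → ℕ) : Prop :=
  ∀ i, 1 ≤ i → i ≤ k → π i ≤ L

/-- A selected node distribution `(s_0, s_1, …, s_L)`:
`R ≥ s_1 ≥ s_2 ≥ … ≥ s_L` and `s_0 + s_1 + … + s_L = k`. -/
def IsDist (L R k : ℕ) (s : ℕ → ℕ) : Prop :=
  (∀ i, 1 ≤ i → i + 1 ≤ L → s (i + 1) ≤ s i) ∧
  (∀ i, 1 ≤ i → i ≤ L → s i ≤ R) ∧
  ∑ i ∈ Finset.range (L + 1), s i = k

/-- `π ∈ Π(s)`: `π` is a cluster order with `#{1 ≤ j ≤ k : π j = c} = s c` for all `0 ≤ c ≤ L`. -/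
def MemPi (L k : ℕ) (s : ℕ → ℕ) (π : ℕ → ℕ) : Prop :=
  IsClusterOrder L k π ∧
  ∀ c, c ≤ L → ((Finset.Icc 1 k).filter (fun j => π j = c)).card = s c

/-- Vertical order of distribution `s` (possibly with separate entries, whose positions are
not constrained here):  over the cluster positions (`π i ≠ 0`) in increasing order, relative
locations are nondecreasing, with ties broken by increasing cluster index. -/
def IsVerticalOrder (L k : ℕ) (s : ℕ → ℕ) (π : ℕ → ℕ) : Prop :=
  MemPi L k s π ∧
  ∀ i j, 1 ≤ i → i < j → j ≤ k → π i ≠ 0 → π j ≠ 0 →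
    relLoc π i ≤ relLoc π j ∧ (relLoc π i = relLoc π j → π i < π j)

/-- The distribution `s*` (no separate node): `s*_0 = 0`, `s*_i = R` for `1 ≤ i ≤ ⌊k/R⌋`,
`s*_{⌊k/R⌋+1} = k − ⌊k/R⌋·R`, and `0` beyond. -/
def sStar0 (R k : ℕ) : ℕ → ℕ := fun i =>
  if i = 0 then 0
  else if i ≤ k / R then R
  else if i = k / R + 1 then k - k / R * R
  else 0

/-- The distribution with one separate node: `s_0 = 1`, `s_i = R` for `1 ≤ i ≤ ⌊(k−1)/R⌋`,
`s_{⌊(k−1)/R⌋+1} = (k−1) − ⌊(k−1)/R⌋·R`, and `0` beyond. -/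
def sStar1 (R k : ℕ) : ℕ → ℕ := fun i =>
  if i = 0 then 1
  else if i ≤ (k - 1) / R then R
  else if i = (k - 1) / R + 1 then (k - 1) - (k - 1) / R * R
  else 0

/-- `π^(j)`: the cluster order with exactly one separate entry, located at position `j`,
whose cluster entries form the vertical order of the distribution `sStar1 R k`. -/
def IsPiJ (L R k j : ℕ) (π : ℕ → ℕ) : Prop :=
  π j = 0 ∧ IsVerticalOrder L k (sStar1 R k) π

namespace Stmt16Aux

/-- rank-to-position map when the separate node sits at position `z`. -/
def pz (z r : ℕ) : ℕ := if r < z then r else r + 1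

/-- position-to-rank map. -/
def qz (z i : ℕ) : ℕ := if i < z then i else i - 1

lemma pz_lt_pz {z r r' : ℕ} (h : r < r') : pz z r < pz z r' := by
  unfold pz; split <;> split <;> omega

lemma pz_le_pz {z r r' : ℕ} (h : r ≤ r') : pz z r ≤ pz z r' := by
  unfold pz; split <;> split <;> omega

lemma pz_ne (z r : ℕ) : pz z r ≠ z := by unfold pz; split <;> omega

lemma one_le_pz {z r : ℕ} (h : 1 ≤ r) : 1 ≤ pz z r := by unfold pz; split <;> omega

lemma pz_le_succ (z r : ℕ) : pz z r ≤ r + 1 := by unfold pz; split <;> omega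

lemma le_pz (z r : ℕ) : r ≤ pz z r := by unfold pz; split <;> omega

lemma pz_qz {z i : ℕ} (h1 : 1 ≤ z) (hi : i ≠ z) : pz z (qz z i) = i := by
  unfold pz qz
  rcases Nat.lt_or_ge i z with h | h
  · rw [if_pos h, if_pos h]
  · have hz : ¬ i < z := by omega
    rw [if_neg hz, if_neg (by omega : ¬ i - 1 < z)]; omega

lemma one_le_qz {z i : ℕ} (h1 : 1 ≤ i) (h2 : 1 ≤ z) (hi : i ≠ z) : 1 ≤ qz z i := by
  unfold qz; split <;> omega

lemma qz_le {z i r : ℕ} (h1 : 1 ≤ z) (hi : i ≠ z) (h : i ≤ pz z r) : qz z i ≤ r := by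
  by_contra hcon
  push_neg at hcon
  have h2 := pz_lt_pz (z := z) hcon
  rw [pz_qz h1 hi] at h2
  omega

/-- count of value `c` among the first `r` cluster ranks. -/
def cnt (π : ℕ → ℕ) (z c r : ℕ) : ℕ :=
  ((Finset.Icc 1 r).filter (fun r' => π (pz z r') = c)).card

lemma filter_card_eq_cnt {π : ℕ → ℕ} {z c : ℕ} (r : ℕ)
    (hz1 : 1 ≤ z) (hπz : π z = 0) (hc : c ≠ 0) :
    ((Finset.Icc 1 (pz z r)).filter (fun i => π i = c)).card = cnt π z c r := by
  unfold cnt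
  apply Finset.card_bij' (fun i _ => qz z i) (fun r' _ => pz z r')
  · intro i hi
    simp only [Finset.mem_filter, Finset.mem_Icc] at hi ⊢
    have hiz : i ≠ z := fun h => by rw [h, hπz] at hi; exact hc hi.2.symm
    refine ⟨⟨one_le_qz hi.1.1 hz1 hiz, qz_le hz1 hiz hi.1.2⟩, ?_⟩
    rw [pz_qz hz1 hiz]; exact hi.2
  · intro r' hr'
    simp only [Finset.mem_filter, Finset.mem_Icc] at hr' ⊢
    exact ⟨⟨one_le_pz hr'.1.1, pz_le_pz hr'.1.2⟩, hr'.2⟩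
  · intro i hi
    simp only [Finset.mem_filter, Finset.mem_Icc] at hi
    have hiz : i ≠ z := fun h => by rw [h, hπz] at hi; exact hc hi.2.symm
    exact pz_qz hz1 hiz
  · intro r' hr'
    unfold pz qz
    rcases Nat.lt_or_ge r' z with h | h
    · rw [if_pos h, if_pos h]
    · rw [if_neg (by omega : ¬ r' < z), if_neg (by omega : ¬ r' + 1 < z)]; omega

lemma cnt_rec {π : ℕ → ℕ} {z c : ℕ} {r : ℕ} (hr : 1 ≤ r) :
    cnt π z c r = cnt π z c (r - 1) + if π (pz z r) = c then 1 else 0 := by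
  unfold cnt
  have h : Finset.Icc 1 r = insert r (Finset.Icc 1 (r - 1)) := by
    ext t; simp only [Finset.mem_insert, Finset.mem_Icc]; omega
  rw [h, Finset.filter_insert]
  have hnotmem : r ∉ (Finset.Icc 1 (r-1)).filter (fun r' => π (pz z r') = c) := by
    simp only [Finset.mem_filter, Finset.mem_Icc]; omega
  split
  · rw [Finset.card_insert_of_notMem hnotmem]
  · omega

lemma cnt_mono {π : ℕ → ℕ} {z c : ℕ} {r r' : ℕ} (h : r ≤ r') :
    cnt π z c r ≤ cnt π z c r' := by
  apply Finset.card_le_card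
  apply Finset.filter_subset_filter
  exact Finset.Icc_subset_Icc_right h

lemma cnt_flat {π : ℕ → ℕ} {z c : ℕ} {r m : ℕ} (hr : 1 ≤ r) (hrm : r - 1 ≤ m)
    (h : ∀ t, r ≤ t → t ≤ m → π (pz z t) ≠ c) :
    cnt π z c m = cnt π z c (r - 1) := by
  unfold cnt
  congr 1
  ext t
  simp only [Finset.mem_filter, Finset.mem_Icc]
  constructor
  · rintro ⟨⟨h1, h2⟩, h3⟩
    refine ⟨⟨h1, ?_⟩, h3⟩
    by_contra hcon
    exact h t (by omega) h2 h3
  · rintro ⟨⟨h1, h2⟩, h3⟩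
    exact ⟨⟨h1, by omega⟩, h3⟩



lemma zero_unique {L R k z : ℕ} {π : ℕ → ℕ} (hp : IsPiJ L R k z π)
    (hz1 : 1 ≤ z) (hzk : z ≤ k) :
    ∀ i, 1 ≤ i → i ≤ k → i ≠ z → π i ≠ 0 := by
  intro i h1 h2 hiz h0
  have hcard : ((Finset.Icc 1 k).filter (fun j => π j = 0)).card = 1 := by
    have := hp.2.1.2 0 (Nat.zero_le L)
    simpa [sStar1] using this
  obtain ⟨a, hA⟩ := Finset.card_eq_one.mp hcard
  have hzmem : z ∈ (Finset.Icc 1 k).filter (fun j => π j = 0) := by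
    simp only [Finset.mem_filter, Finset.mem_Icc]
    exact ⟨⟨hz1, hzk⟩, hp.1⟩
  have himem : i ∈ (Finset.Icc 1 k).filter (fun j => π j = 0) := by
    simp only [Finset.mem_filter, Finset.mem_Icc]
    exact ⟨⟨h1, h2⟩, h0⟩
  rw [hA] at hzmem himem
  simp only [Finset.mem_singleton] at hzmem himem
  omega

lemma relLoc_rank {L R k z : ℕ} {π : ℕ → ℕ} (hp : IsPiJ L R k z π)
    (hz1 : 1 ≤ z) (hzk : z ≤ k) {r : ℕ} (h1 : 1 ≤ r) (h2 : r + 1 ≤ k) :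
    relLoc π (pz z r) = cnt π z (π (pz z r)) r := by
  have hne : π (pz z r) ≠ 0 :=
    zero_unique hp hz1 hzk _ (one_le_pz h1) (le_trans (pz_le_succ z r) h2) (pz_ne z r)
  unfold relLoc
  exact filter_card_eq_cnt r hz1 hp.1 hne

lemma cnt_total {L R k z : ℕ} {π : ℕ → ℕ} (hp : IsPiJ L R k z π)
    (hz1 : 1 ≤ z) (hzk : z ≤ k) (hk : 2 ≤ k) {c : ℕ} (hc1 : 1 ≤ c) (hcL : c ≤ L) :
    cnt π z c (k - 1) = sStar1 R k c := by
  have hcne : c ≠ 0 := by omega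
  rw [← hp.2.1.2 c hcL, ← filter_card_eq_cnt (k-1) hz1 hp.1 hcne]
  congr 1
  ext t
  simp only [Finset.mem_filter, Finset.mem_Icc]
  constructor
  · rintro ⟨⟨a, b⟩, cc⟩
    refine ⟨⟨a, le_trans b (le_trans (pz_le_succ _ _) (by omega))⟩, cc⟩
  · rintro ⟨⟨a, b⟩, cc⟩
    have htz : t ≠ z := fun h => by rw [h, hp.1] at cc; exact hcne cc.symm
    refine ⟨⟨a, ?_⟩, cc⟩
    unfold pz; split <;> omega

lemma vert_rank {L R k z : ℕ} {π : ℕ → ℕ} (hp : IsPiJ L R k z π)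
    (hz1 : 1 ≤ z) (hzk : z ≤ k) {r r' : ℕ} (h1 : 1 ≤ r) (h2 : r < r') (h3 : r' + 1 ≤ k) :
    relLoc π (pz z r) ≤ relLoc π (pz z r') ∧
      (relLoc π (pz z r) = relLoc π (pz z r') → π (pz z r) < π (pz z r')) :=
  hp.2.2 (pz z r) (pz z r') (one_le_pz h1) (pz_lt_pz h2)
    (le_trans (pz_le_succ _ _) h3)
    (zero_unique hp hz1 hzk _ (one_le_pz h1) (le_trans (pz_le_succ _ _) (by omega)) (pz_ne _ _))
    (zero_unique hp hz1 hzk _ (one_le_pz (by omega)) (le_trans (pz_le_succ _ _) h3) (pz_ne _ _))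

lemma helper {L R k z : ℕ} {π : ℕ → ℕ} (hp : IsPiJ L R k z π)
    (hz1 : 1 ≤ z) (hzk : z ≤ k) {r c : ℕ} (h1 : 1 ≤ r) (h2 : r + 1 ≤ k)
    (hc0 : c ≠ 0) (hcL : c ≤ L)
    (hlt : cnt π z c (r - 1) < sStar1 R k c)
    (hneq : π (pz z r) ≠ c) :
    relLoc π (pz z r) ≤ cnt π z c (r - 1) + 1 ∧
      (relLoc π (pz z r) = cnt π z c (r - 1) + 1 → π (pz z r) < c) := by
  have hk2 : 2 ≤ k := by omega
  set S := (Finset.Icc r (k-1)).filter (fun t => π (pz z t) = c) with hS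
  have hSne : S.Nonempty := by
    by_contra hemp
    rw [Finset.not_nonempty_iff_eq_empty] at hemp
    have hflat0 : cnt π z c (k-1) = cnt π z c (r-1) := by
      apply cnt_flat h1 (by omega)
      intro t ht1 ht2 hval
      have htS : t ∈ S := by
        simp only [hS, Finset.mem_filter, Finset.mem_Icc]
        exact ⟨⟨ht1, ht2⟩, hval⟩
      rw [hemp] at htS
      simp at htS
    rw [cnt_total hp hz1 hzk hk2 (by omega) hcL] at hflat0
    have := cnt_mono (π := π) (z := z) (c := c) (show r - 1 ≤ k - 1 by omega)
    omega
  obtain ⟨r2, hr2mem, hmin⟩ : ∃ r2 ∈ S, ∀ t ∈ S, r2 ≤ t :=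
    ⟨S.min' hSne, S.min'_mem hSne, fun t ht => S.min'_le t ht⟩
  simp only [hS, Finset.mem_filter, Finset.mem_Icc] at hr2mem
  obtain ⟨⟨hrr2, hr2k⟩, hval2⟩ := hr2mem
  have hrlt : r < r2 := by
    rcases Nat.lt_or_ge r r2 with h | h
    · exact h
    · exfalso
      have : r = r2 := by omega
      rw [this] at hneq
      exact hneq hval2
  have hflat : cnt π z c (r2 - 1) = cnt π z c (r - 1) := by
    apply cnt_flat h1 (by omega)
    intro t ht1 ht2 hval
    have htS : t ∈ S := by
      simp only [hS, Finset.mem_filter, Finset.mem_Icc]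
      exact ⟨⟨ht1, by omega⟩, hval⟩
    have := hmin t htS
    omega
  have hrel2 : relLoc π (pz z r2) = cnt π z c (r - 1) + 1 := by
    rw [relLoc_rank hp hz1 hzk (by omega : 1 ≤ r2) (by omega : r2 + 1 ≤ k), hval2,
      cnt_rec (by omega : 1 ≤ r2), if_pos hval2, hflat]
  have hvert := vert_rank hp hz1 hzk h1 hrlt (by omega : r2 + 1 ≤ k)
  rw [hrel2, hval2] at hvert
  exact hvert

lemma values_eq {L R k j : ℕ} {πa πb : ℕ → ℕ}
    (hj1 : 1 ≤ j) (hjk : j + 1 ≤ k)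
    (ha : IsPiJ L R k j πa) (hb : IsPiJ L R k (j + 1) πb) :
    ∀ r, 1 ≤ r → r + 1 ≤ k → πa (pz j r) = πb (pz (j + 1) r) := by
  intro r
  induction r using Nat.strong_induction_on with
  | _ r IH =>
  intro h1 h2
  have hcnt : ∀ c, cnt πa j c (r-1) = cnt πb (j+1) c (r-1) := by
    intro c
    unfold cnt
    congr 1
    apply Finset.filter_congr
    intro t ht
    simp only [Finset.mem_Icc] at ht
    rw [IH t (by omega) ht.1 (by omega)]
  by_contra hne
  have hva0 : πa (pz j r) ≠ 0 :=
    zero_unique ha hj1 (by omega) _ (one_le_pz h1) (le_trans (pz_le_succ _ _) h2) (pz_ne _ _)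
  have hvb0 : πb (pz (j+1) r) ≠ 0 :=
    zero_unique hb (by omega) hjk _ (one_le_pz h1) (le_trans (pz_le_succ _ _) h2) (pz_ne _ _)
  have hvaL : πa (pz j r) ≤ L := ha.2.1.1 _ (one_le_pz h1) (le_trans (pz_le_succ _ _) h2)
  have hvbL : πb (pz (j+1) r) ≤ L := hb.2.1.1 _ (one_le_pz h1) (le_trans (pz_le_succ _ _) h2)
  have hk2 : 2 ≤ k := by omega
  have htotA : cnt πa j (πa (pz j r)) (k-1) = sStar1 R k (πa (pz j r)) :=
    cnt_total ha hj1 (by omega) hk2 (by omega) hvaL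
  have htotB : cnt πb (j+1) (πb (pz (j+1) r)) (k-1) = sStar1 R k (πb (pz (j+1) r)) :=
    cnt_total hb (by omega) hjk hk2 (by omega) hvbL
  have hstepA : cnt πa j (πa (pz j r)) r = cnt πa j (πa (pz j r)) (r-1) + 1 := by
    rw [cnt_rec h1, if_pos rfl]
  have hstepB : cnt πb (j+1) (πb (pz (j+1) r)) r = cnt πb (j+1) (πb (pz (j+1) r)) (r-1) + 1 := by
    rw [cnt_rec h1, if_pos rfl]
  have hltB : cnt πb (j+1) (πa (pz j r)) (r-1) < sStar1 R k (πa (pz j r)) := by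
    rw [← hcnt, ← htotA]
    have := cnt_mono (π := πa) (z := j) (c := πa (pz j r)) (show r ≤ k-1 by omega)
    omega
  have hltA : cnt πa j (πb (pz (j+1) r)) (r-1) < sStar1 R k (πb (pz (j+1) r)) := by
    rw [hcnt, ← htotB]
    have := cnt_mono (π := πb) (z := j+1) (c := πb (pz (j+1) r)) (show r ≤ k-1 by omega)
    omega
  have hB := helper hb (by omega) hjk h1 h2 hva0 hvaL hltB (fun hh => hne hh.symm)
  have hA := helper ha hj1 (by omega) h1 h2 hvb0 hvbL hltA hne
  have hrelA : relLoc πa (pz j r) = cnt πa j (πa (pz j r)) (r-1) + 1 := by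
    rw [relLoc_rank ha hj1 (by omega) h1 h2, hstepA]
  have hrelB : relLoc πb (pz (j+1) r) = cnt πb (j+1) (πb (pz (j+1) r)) (r-1) + 1 := by
    rw [relLoc_rank hb (by omega) hjk h1 h2, hstepB]
  rw [hrelA] at hA
  rw [hrelB] at hB
  have hcntab : cnt πa j (πb (pz (j+1) r)) (r-1) = cnt πb (j+1) (πb (pz (j+1) r)) (r-1) := hcnt _
  have hcntba : cnt πb (j+1) (πa (pz j r)) (r-1) = cnt πa j (πa (pz j r)) (r-1) := (hcnt _).symm
  rw [hcntab] at hA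
  rw [hcntba] at hB
  have e1 := hA.1
  have e2 := hB.1
  have heq : cnt πa j (πa (pz j r)) (r-1) = cnt πb (j+1) (πb (pz (j+1) r)) (r-1) := by omega
  have l1 := hA.2 (by omega)
  have l2 := hB.2 (by omega)
  omega

lemma relLoc_pos {π : ℕ → ℕ} {i : ℕ} (h1 : 1 ≤ i) : 1 ≤ relLoc π i := by
  unfold relLoc
  apply Finset.card_pos.mpr
  exact ⟨i, Finset.mem_filter.mpr ⟨Finset.mem_Icc.mpr ⟨h1, le_rfl⟩, rfl⟩⟩

lemma relLoc_le_self (π : ℕ → ℕ) (i : ℕ) : relLoc π i ≤ i := by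
  unfold relLoc
  have h := Finset.card_filter_le (Finset.Icc 1 i) (fun j => π j = π i)
  rw [Nat.card_Icc] at h
  omega

lemma rank_bound {L R k j : ℕ} {π : ℕ → ℕ} (hp : IsPiJ L R k (j + 1) π)
    (hj1 : 1 ≤ j) (hjk : j + 1 ≤ k) :
    j ≤ (k-1)/R * min R (relLoc π j) + min ((k-1) - (k-1)/R * R) (relLoc π j) := by
  obtain ⟨m, hm⟩ : ∃ m, m = (k-1)/R := ⟨_, rfl⟩
  rw [← hm]
  set h := relLoc π j with hh
  set T := (Finset.Icc 1 (m+1)).biUnion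
    (fun c => {c} ×ˢ Finset.Icc 1 (min (sStar1 R k c) h)) with hT
  have hone : ∀ i, 1 ≤ i → i ≤ j → π i ≠ 0 := fun i a b =>
    zero_unique hp (by omega) hjk i a (by omega) (by omega)
  have hrelh : ∀ i, 1 ≤ i → i ≤ j → relLoc π i ≤ h := by
    intro i a b
    rcases Nat.eq_or_lt_of_le b with e | l
    · rw [e]
    · exact (hp.2.2 i j a l (by omega) (hone i a b) (hone j hj1 le_rfl)).1
  have hcard : (Finset.Icc 1 j).card ≤ T.card := by
    apply Finset.card_le_card_of_injOn (fun i => (π i, relLoc π i))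
    · intro i hi
      simp only [Finset.mem_coe, Finset.mem_Icc] at hi
      have h0 := hone i hi.1 hi.2
      have hL := hp.2.1.1 i hi.1 (by omega)
      have hts : relLoc π i ≤ sStar1 R k (π i) := by
        rw [← hp.2.1.2 (π i) hL]
        unfold relLoc
        apply Finset.card_le_card
        exact Finset.filter_subset_filter _ (Finset.Icc_subset_Icc_right (by omega))
      have ht1 : 1 ≤ relLoc π i := relLoc_pos hi.1
      have hch : π i ≤ m + 1 := by
        by_contra hcon
        push_neg at hcon
        have hz : sStar1 R k (π i) = 0 := by
          unfold sStar1
          rw [← hm, if_neg h0, if_neg (by omega), if_neg (by omega)]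
        omega
      simp only [hT, Finset.mem_coe, Finset.mem_biUnion]
      refine ⟨π i, Finset.mem_Icc.mpr ⟨by omega, hch⟩, ?_⟩
      simp only [Finset.mem_product, Finset.mem_singleton, Finset.mem_Icc]
      exact ⟨trivial, ht1, le_min hts (hrelh i hi.1 hi.2)⟩
    · intro i hi i' hi' heq
      simp only [Finset.coe_Icc, Set.mem_Icc] at hi hi'
      have e1 : π i = π i' := congrArg Prod.fst heq
      have e2 : relLoc π i = relLoc π i' := congrArg Prod.snd heq
      by_contra hne
      rcases Nat.lt_or_ge i i' with hlt' | hge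
      · have := (hp.2.2 i i' hi.1 hlt' (by omega) (hone i hi.1 (by omega))
          (hone i' (by omega) hi'.2)).2 e2
        omega
      · have hlt' : i' < i := by omega
        have := (hp.2.2 i' i hi'.1 hlt' (by omega) (hone i' hi'.1 (by omega))
          (hone i (by omega) hi.2)).2 e2.symm
        omega
  have hTcard : T.card ≤ ∑ c ∈ Finset.Icc 1 (m+1), min (sStar1 R k c) h := by
    refine le_trans Finset.card_biUnion_le ?_
    apply Finset.sum_le_sum
    intro c hc
    rw [Finset.card_product, Finset.card_singleton, one_mul, Nat.card_Icc]
    omega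
  have hsum : ∑ c ∈ Finset.Icc 1 (m+1), min (sStar1 R k c) h
      = m * min R h + min ((k-1) - m*R) h := by
    rw [Finset.sum_Icc_succ_top (by omega : 1 ≤ m + 1)]
    congr 1
    · have hcongr : ∀ c ∈ Finset.Icc 1 m, min (sStar1 R k c) h = min R h := by
        intro c hc
        simp only [Finset.mem_Icc] at hc
        have : sStar1 R k c = R := by
          unfold sStar1
          rw [← hm, if_neg (by omega), if_pos (by omega)]
        rw [this]
      rw [Finset.sum_congr rfl hcongr, Finset.sum_const, Nat.card_Icc]
      rw [Nat.add_sub_cancel, smul_eq_mul]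
    · have : sStar1 R k (m+1) = (k-1) - m*R := by
        unfold sStar1
        rw [← hm, if_neg (by omega), if_neg (by omega), if_pos rfl]
      rw [this]
  have hj' : (Finset.Icc 1 j).card = j := by rw [Nat.card_Icc]; omega
  omega

lemma arith {R k dC j h m : ℕ} (hR : 2 ≤ R) (hdC : 1 ≤ dC) (hkd : k ≤ R - 1 + dC)
    (hj : j + 1 ≤ k) (hh1 : 1 ≤ h) (hm : m = (k-1)/R)
    (hbound : j ≤ m * min R h + min ((k-1) - m*R) h) : j + 1 ≤ dC + h := by
  have hdm := Nat.div_add_mod (k-1) R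
  rw [← hm] at hdm
  have hq : (k-1) % R < R := Nat.mod_lt _ (by omega)
  have hPQ : m * R + (k-1) % R = k - 1 := by rw [mul_comm]; exact hdm
  have f1 : min ((k-1) - m*R) h ≤ (k-1) - m*R := min_le_left _ _
  have f2 : min ((k-1) - m*R) h ≤ h := min_le_right _ _
  rcases Nat.le_total R h with hc | hc
  · rw [min_eq_left hc] at hbound
    omega
  · rw [min_eq_right hc] at hbound
    rcases Nat.eq_zero_or_pos m with h0 | hm1
    · rw [h0, zero_mul] at hbound
      omega
    · have key : m * h + (R - h) ≤ m * R := by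
        have k1 : R - h ≤ m * (R - h) := Nat.le_mul_of_pos_left _ hm1
        have k2 : m * h + m * (R - h) = m * R := by
          rw [← Nat.mul_add, Nat.add_sub_cancel' hc]
        omega
      omega

end Stmt16Aux


open Stmt16Aux

/-- `a_{j+1}(π^(j)) = a_j(π^(j+1))` and `b_j(π^(j+1)) = b_{j+1}(π^(j)) + 1`;
consequently `w_j(π^(j+1)) − w_{j+1}(π^(j)) = β_C` and
`w_j(π^(j+1)) + w_{j+1}(π^(j+1)) = w_j(π^(j)) + w_{j+1}(π^(j))`. -/
theorem stmt16 (L R k dI dC : ℕ) (βI βC : ℝ)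
    (hL : 1 ≤ L) (hR : 2 ≤ R) (hk : 2 ≤ k)
    (hdI : dI = R - 1) (hdC : 1 ≤ dC) (hkd : k ≤ dI + dC)
    (hβ : βC ≤ βI) (hβC : 0 < βC)
    (hk1LR : k - 1 ≤ L * R)
    (j : ℕ) (hj1 : 1 ≤ j) (hjk : j + 1 ≤ k)
    (πa πb : ℕ → ℕ) (ha : IsPiJ L R k j πa) (hb : IsPiJ L R k (j + 1) πb) :
    aCoef dI πa (j + 1) = aCoef dI πb j ∧
    bCoef dC πb j = bCoef dC πa (j + 1) + 1 ∧
    weight dI dC βI βC πb j - weight dI dC βI βC πa (j + 1) = βC ∧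
    weight dI dC βI βC πb j + weight dI dC βI βC πb (j + 1) =
      weight dI dC βI βC πa j + weight dI dC βI βC πa (j + 1) := by
  have hpza : pz j j = j + 1 := by unfold pz; rw [if_neg (lt_irrefl j)]
  have hpzb : pz (j+1) j = j := by unfold pz; rw [if_pos (Nat.lt_succ_self j)]
  have hval : πa (j + 1) = πb j := by
    have h := values_eq hj1 hjk ha hb j hj1 hjk
    rwa [hpza, hpzb] at h
  have ha0 : πa (j+1) ≠ 0 := zero_unique ha hj1 (by omega) (j+1) (by omega) hjk (by omega)
  have hb0 : πb j ≠ 0 := zero_unique hb (by omega) hjk j hj1 (by omega) (by omega)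
  have hcntall : ∀ c m, m ≤ k - 1 → cnt πa j c m = cnt πb (j+1) c m := by
    intro c m hmk
    unfold cnt
    congr 1
    apply Finset.filter_congr
    intro t ht
    simp only [Finset.mem_Icc] at ht
    rw [values_eq hj1 hjk ha hb t ht.1 (by omega)]
  have hrel : relLoc πa (j+1) = relLoc πb j := by
    have h1 := relLoc_rank ha hj1 (by omega) hj1 hjk
    have h2 := relLoc_rank hb (by omega) hjk hj1 hjk
    rw [hpza] at h1
    rw [hpzb] at h2
    rw [h1, h2, cnt_rec hj1, cnt_rec hj1, hpza, hpzb, hval,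
      hcntall (πb j) (j-1) (by omega)]
  have hbound := rank_bound hb hj1 hjk
  have hh1 : 1 ≤ relLoc πb j := relLoc_pos hj1
  have hjb : j + 1 ≤ dC + relLoc πb j :=
    arith hR hdC (by omega) hjk hh1 rfl hbound
  have hsle : relLoc πb j ≤ j := relLoc_le_self πb j
  have part1 : aCoef dI πa (j+1) = aCoef dI πb j := by unfold aCoef; rw [hrel]
  have part2 : bCoef dC πb j = bCoef dC πa (j+1) + 1 := by
    unfold bCoef; rw [hrel]; omega
  have part3 : weight dI dC βI βC πb j - weight dI dC βI βC πa (j+1) = βC := by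
    unfold weight
    rw [if_neg hb0, if_neg ha0]
    have e1 : (aCoef dI πb j : ℝ) = (aCoef dI πa (j+1) : ℝ) := by rw [part1]
    have e2 : (bCoef dC πb j : ℝ) = (bCoef dC πa (j+1) : ℝ) + 1 := by
      rw [part2]; push_cast; ring
    rw [e1, e2]; ring
  refine ⟨part1, part2, part3, ?_⟩
  have wb2 : weight dI dC βI βC πb (j+1) = ((dI + dC + 1 - (j+1) : ℕ) : ℝ) * βC := by
    unfold weight; rw [if_pos hb.1]
  have wa1 : weight dI dC βI βC πa j = ((dI + dC + 1 - j : ℕ) : ℝ) * βC := by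
    unfold weight; rw [if_pos ha.1]
  have h4 : ((dI + dC + 1 - j : ℕ) : ℝ) = ((dI + dC + 1 - (j+1) : ℕ) : ℝ) + 1 := by
    have e : dI + dC + 1 - j = (dI + dC + 1 - (j+1)) + 1 := by omega
    rw [e]; push_cast; ring
  rw [wb2, wa1, h4]
  linarith [part3]
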